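/- Let R be a perfect F-restriction monoid with identity λ, let P(R) be its semilattice of projections (with meet given by multiplication), and let M̄ = {m(r) : r ∈ R}. Then: (i) M̄ is a submonoid of R, and m satisfies m(rs) = m(r)m(s), m(λ) = λ, and m(r) = m(s) if and only if r σ s (so M̄ is a monoid isomorphic to the maximum reduced quotient R/σ); (ii) the assignment u·e = (ue)⁺ for u ∈ M̄ and e ∈ P(R) defines an action of the monoid M̄ on the semilattice P(R) by endomorphisms, and this action satisfies u·λ = λ for all u ∈ M̄; (iii) the map r ↦ (r⁺, m(r)) is a bijection from R onto the semidirect product P(R) ⋊ M̄ which preserves multiplication, the operation ⁺, the operation m, and the identity element. -/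
import Mathlib


/-- `e` is a projection: an element of the form `a⁺`. -/
def IsProjection {R : Type*} (plus : R → R) (e : R) : Prop := ∃ a, e = plus a

/-- The natural partial order: `s ≤ t` iff `s = s⁺·t`. -/
def NatLe {R : Type*} (mul : R → R → R) (plus : R → R) (s t : R) : Prop :=
  s = mul (plus s) t

/-- The relation σ: `s σ t` iff `e·s = e·t` for some projection `e`. -/
def SigmaRel {R : Type*} (mul : R → R → R) (plus : R → R) (s t : R) : Prop :=
  ∃ e, IsProjection plus e ∧ mul e s = mul e t

/-- structure theorem for perfect F-restriction monoids: with
`M̄ = range m` and the action `u·e = (ue)⁺` of `M̄` on the projections,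
`r ↦ (r⁺, m r)` is an isomorphism of `R` onto `P(R) ⋊ M̄`. -/
theorem stmt_9 {R : Type*} [Semigroup R] (plus m : R → R) (lam : R)
    (h1 : ∀ x : R, plus x * x = x)
    (h2 : ∀ x y : R, plus x * plus y = plus y * plus x)
    (h3 : ∀ x y : R, plus (plus x * y) = plus x * plus y)
    (h4 : ∀ x y : R, x * plus y = plus (x * y) * x)
    -- R is a monoid with identity lam:
    (hlamId : ∀ s : R, lam * s = s ∧ s * lam = s)
    -- m a is the maximum element of the σ-class of a:
    (hF : ∀ a : R, SigmaRel (· * ·) plus (m a) a ∧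
      ∀ t, SigmaRel (· * ·) plus t a → NatLe (· * ·) plus t (m a))
    -- lam is the maximum projection:
    (hlamProj : IsProjection plus lam)
    (hlamMax : ∀ e, IsProjection plus e → NatLe (· * ·) plus e lam)
    -- perfectness:
    (hperf1 : ∀ s t : R, m s * m t = m (s * t))
    (hperf2 : ∀ s : R, plus (m s) = lam) :
    -- (i) M̄ = range m is a submonoid and m is multiplicative, unital, and
    -- classifies σ:
    (lam ∈ Set.range m ∧
      ∀ u ∈ Set.range m, ∀ v ∈ Set.range m, u * v ∈ Set.range m) ∧
    (∀ r s : R, m (r * s) = m r * m s) ∧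
    (m lam = lam) ∧
    (∀ r s : R, m r = m s ↔ SigmaRel (· * ·) plus r s) ∧
    -- (ii) u·e = (ue)⁺ is an action of M̄ on P(R) by endomorphisms with u·λ = λ:
    (∀ u ∈ Set.range m, ∀ e : R, IsProjection plus e →
      IsProjection plus (plus (u * e))) ∧
    (∀ u ∈ Set.range m, ∀ v ∈ Set.range m, ∀ e : R, IsProjection plus e →
      plus (u * v * e) = plus (u * plus (v * e))) ∧
    (∀ e : R, IsProjection plus e → plus (lam * e) = e) ∧
    (∀ u ∈ Set.range m, ∀ e f : R, IsProjection plus e → IsProjection plus f →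
      plus (u * (e * f)) = plus (u * e) * plus (u * f)) ∧
    (∀ u ∈ Set.range m, plus (u * lam) = lam) ∧
    -- (iii) r ↦ (r⁺, m r) is a bijection onto P(R) ⋊ M̄ preserving ·, ⁺, m and
    -- the identity element:
    Function.Injective (fun r : R => (plus r, m r)) ∧
    (Set.range (fun r : R => (plus r, m r)) =
      {p : R × R | IsProjection plus p.1 ∧ p.2 ∈ Set.range m}) ∧
    (∀ r s : R, plus (r * s) = plus r * plus (m r * plus s) ∧
      m (r * s) = m r * m s) ∧
    (∀ r : R, plus (plus r) = plus r ∧ m (plus r) = lam) ∧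
    (∀ r : R, plus (m r) = lam ∧ m (m r) = m r) ∧
    (plus lam = lam ∧ m lam = lam) := by
  -- basic consequences
  have idem : ∀ x : R, plus x * plus x = plus x := by
    intro x; rw [← h3, h1]
  have plusplus : ∀ x : R, plus (plus x) = plus x := by
    intro x
    have b := h3 x (plus x)
    rw [idem x] at b
    calc plus (plus x) = plus x * plus (plus x) := b
      _ = plus (plus x) * plus x := (h2 x (plus x)).symm ▸ (h2 (plus x) x)
      _ = plus x := h1 (plus x)
  have projFix : ∀ e : R, IsProjection plus e → plus e = e := by
    rintro e ⟨a, rfl⟩; exact plusplus a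
  have lamP : plus lam = lam := projFix lam hlamProj
  have refl_sigma : ∀ r : R, SigmaRel (· * ·) plus r r := fun r => ⟨lam, hlamProj, rfl⟩
  have le_m : ∀ r : R, r = plus r * m r := by
    intro r
    have h := (hF r).2 r (refl_sigma r)
    simp only [NatLe] at h
    exact h
  have mlam : m lam = lam := by
    have h := le_m lam
    rw [lamP, (hlamId (m lam)).1] at h
    exact h.symm
  have sigma_trans : ∀ r s t : R, SigmaRel (· * ·) plus r s → SigmaRel (· * ·) plus s t →
      SigmaRel (· * ·) plus r t := by
    rintro r s t ⟨e, ⟨a, rfl⟩, hrs⟩ ⟨f, ⟨b, rfl⟩, hst⟩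
    simp only [] at hrs hst
    refine ⟨plus a * plus b, ⟨plus a * b, (h3 a b).symm⟩, ?_⟩
    show plus a * plus b * r = plus a * plus b * t
    calc plus a * plus b * r = plus b * (plus a * r) := by rw [h2, mul_assoc]
      _ = plus b * (plus a * s) := by rw [hrs]
      _ = plus a * (plus b * s) := by rw [← mul_assoc, ← h2, mul_assoc]
      _ = plus a * (plus b * t) := by rw [hst]
      _ = plus a * plus b * t := by rw [mul_assoc]
  have sigma_symm : ∀ r s : R, SigmaRel (· * ·) plus r s → SigmaRel (· * ·) plus s r := by
    rintro r s ⟨e, he, h⟩; exact ⟨e, he, h.symm⟩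
  have m_eq_of_sigma : ∀ r s : R, SigmaRel (· * ·) plus r s → m r = m s := by
    intro r s hrs
    have h5 := sigma_trans _ _ _ ((hF r).1) hrs
    have h6 := (hF s).2 (m r) h5
    simp only [NatLe] at h6
    rw [hperf2, (hlamId _).1] at h6
    exact h6
  have sigma_of_m_eq : ∀ r s : R, m r = m s → SigmaRel (· * ·) plus r s := by
    intro r s h
    have h5 : SigmaRel (· * ·) plus (m r) s := by rw [h]; exact (hF s).1
    exact sigma_trans _ _ _ (sigma_symm _ _ ((hF r).1)) h5
  have m_m : ∀ x : R, m (m x) = m x := fun x => m_eq_of_sigma _ _ ((hF x).1)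
  have m_plus_lam : ∀ x : R, m (plus x) = lam := by
    intro x
    have hs : SigmaRel (· * ·) plus (plus x) lam :=
      ⟨plus x, ⟨x, rfl⟩, show plus x * plus x = plus x * lam by
        rw [idem, (hlamId _).2]⟩
    rw [m_eq_of_sigma _ _ hs, mlam]
  have plus_mul_key : ∀ r s : R, plus (r * s) = plus (r * plus s) := by
    intro r s
    have A : plus (r * plus s) = plus (r * s) * plus r := by
      conv_lhs => rw [h4, h3]
    have B : plus (r * s) = plus (r * s) * plus r := by
      conv_lhs => rw [← h1 r]
      rw [mul_assoc, h3, h2]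
    rw [A, ← B]
  have plus_mul : ∀ r s : R, plus (r * s) = plus r * plus (m r * plus s) := by
    intro r s
    have C : r * plus s = plus r * (m r * plus s) := by
      rw [← mul_assoc, ← le_m r]
    rw [plus_mul_key, C, h3]
  refine ⟨⟨⟨lam, mlam⟩, ?_⟩, fun r s => (hperf1 r s).symm, mlam,
    fun r s => ⟨sigma_of_m_eq r s, m_eq_of_sigma r s⟩, ?_, ?_, ?_, ?_, ?_, ?_, ?_, ?_, ?_, ?_, ⟨lamP, mlam⟩⟩
  · rintro u ⟨a, rfl⟩ v ⟨b, rfl⟩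
    exact ⟨a * b, (hperf1 a b).symm⟩
  · -- action lands in projections
    exact fun u _ e _ => ⟨u * e, rfl⟩
  · -- action is associative
    rintro u hu v hv e he
    rw [mul_assoc]
    exact plus_mul_key u (v * e)
  · -- identity acts trivially
    intro e he
    rw [(hlamId e).1]
    exact projFix e he
  · -- acts by endomorphisms
    rintro u ⟨a, rfl⟩ e f he hf
    have hul : plus (m a) = lam := hperf2 a
    set u := m a with hu
    have hee := projFix e he
    have hff := projFix f hf
    have key : u * (e * f) = plus (u * e) * (plus (u * f) * u) := by
      calc u * (e * f) = (u * plus e) * f := by rw [hee, ← mul_assoc]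
        _ = (plus (u * e) * u) * f := by rw [h4]
        _ = plus (u * e) * (u * plus f) := by rw [mul_assoc, hff]
        _ = plus (u * e) * (plus (u * f) * u) := by rw [h4]
    rw [key, h3, h3, hul, (hlamId _).2]
  · -- u · lam = lam
    rintro u ⟨a, rfl⟩
    rw [(hlamId _).2, hperf2]
  · -- injectivity
    intro r s hrs
    have e1 : plus r = plus s := congrArg Prod.fst hrs
    have e2 : m r = m s := congrArg Prod.snd hrs
    calc r = plus r * m r := le_m r
      _ = plus s * m s := by rw [e1, e2]
      _ = s := (le_m s).symm
  · -- range
    ext p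
    constructor
    · rintro ⟨r, rfl⟩
      exact ⟨⟨r, rfl⟩, ⟨r, rfl⟩⟩
    · rintro ⟨⟨c, hc⟩, ⟨a, ha⟩⟩
      refine ⟨p.1 * p.2, ?_⟩
      have e1 : plus (p.1 * p.2) = p.1 := by
        rw [hc, ← ha, h3, hperf2, (hlamId _).2]
      have e2 : m (p.1 * p.2) = p.2 := by
        rw [← hperf1, hc, ← ha, m_plus_lam, m_m, (hlamId _).1]
      show (plus (p.1 * p.2), m (p.1 * p.2)) = p
      rw [e1, e2]
  · -- multiplicativity
    exact fun r s => ⟨plus_mul r s, (hperf1 r s).symm⟩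
  · exact fun r => ⟨plusplus r, m_plus_lam r⟩
  · exact fun r => ⟨hperf2 r, m_m r⟩
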